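/- An n×n matrix M is a Q₀-matrix (every weakly feasible LCP(M,q) is solvable) if and only if the complementary range K(M) is convex, if and only if K(M) = cone([I, −M]). -/

import Mathlib

open Matrix

/-- `M` is column sufficient. -/
def ColSuff {n : ℕ} (M : Matrix (Fin n) (Fin n) ℝ) : Prop :=
  ∀ z : Fin n → ℝ, (∀ i, z i * M.mulVec z i ≤ 0) → ∀ i, z i * M.mulVec z i = 0

/-- `M` is sufficient: both `M` and `Mᵀ` are column sufficient. -/
def Suff {n : ℕ} (M : Matrix (Fin n) (Fin n) ℝ) : Prop := ColSuff M ∧ ColSuff Mᵀ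

/-- The matrix `A = [I, -M]`, with columns indexed by `Fin n ⊕ Fin n`. -/
def Amat {n : ℕ} (M : Matrix (Fin n) (Fin n) ℝ) : Matrix (Fin n) (Fin n ⊕ Fin n) ℝ :=
  Matrix.fromCols 1 (-M)

/-- The complementary index. -/
def bar {n : ℕ} : Fin n ⊕ Fin n → Fin n ⊕ Fin n
  | .inl i => .inr i
  | .inr i => .inl i

/-- `B` is a basis of `A = [I, -M]`: `n` linearly independent columns. -/
def IsBasis {n : ℕ} (M : Matrix (Fin n) (Fin n) ℝ) (B : Finset (Fin n ⊕ Fin n)) : Prop :=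
  B.card = n ∧ LinearIndependent ℝ (fun j : B => (Amat M)ᵀ (j : Fin n ⊕ Fin n))

/-- A complementary basis: a basis containing exactly one of each complementary pair. -/
def IsComplBasis {n : ℕ} (M : Matrix (Fin n) (Fin n) ℝ) (B : Finset (Fin n ⊕ Fin n)) : Prop :=
  IsBasis M B ∧ ∀ i : Fin n, Xor' (Sum.inl i ∈ B) (Sum.inr i ∈ B)

/-- The complementary cone `𝒞(J)`: nonnegative combinations of the columns of `A` indexed by `J`. -/
def coneOf {n : ℕ} (M : Matrix (Fin n) (Fin n) ℝ) (J : Finset (Fin n ⊕ Fin n)) :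
    Set (Fin n → ℝ) :=
  {y | ∃ c : Fin n ⊕ Fin n → ℝ, (∀ j, 0 ≤ c j) ∧ (∀ j ∉ J, c j = 0) ∧ y = (Amat M).mulVec c}


/-- The complementary range: right hand sides for which the LCP is solvable. -/
def Krange {n : ℕ} (M : Matrix (Fin n) (Fin n) ℝ) : Set (Fin n → ℝ) :=
  {q | ∃ w z : Fin n → ℝ, (∀ i, 0 ≤ w i) ∧ (∀ i, 0 ≤ z i) ∧
    w - M.mulVec z = q ∧ w ⬝ᵥ z = 0}

/-- The cone generated by the columns of `[I, -M]`. -/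
def coneAll {n : ℕ} (M : Matrix (Fin n) (Fin n) ℝ) : Set (Fin n → ℝ) :=
  {y | ∃ c : Fin n ⊕ Fin n → ℝ, (∀ j, 0 ≤ c j) ∧ y = (Amat M).mulVec c}

/-- `M` is a Q₀-matrix: every weakly feasible LCP(M,q) is solvable. -/
def IsQ0 {n : ℕ} (M : Matrix (Fin n) (Fin n) ℝ) : Prop :=
  ∀ q : Fin n → ℝ,
    (∃ w z : Fin n → ℝ, (∀ i, 0 ≤ w i) ∧ (∀ i, 0 ≤ z i) ∧ w - M.mulVec z = q) →
    q ∈ Krange M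


lemma krange_smul' {n : ℕ} (M : Matrix (Fin n) (Fin n) ℝ) {q : Fin n → ℝ} {t : ℝ}
    (ht : 0 ≤ t) (hq : q ∈ Krange M) : t • q ∈ Krange M := by
  obtain ⟨w, z, hw, hz, heq, hperp⟩ := hq
  refine ⟨t • w, t • z, fun i => mul_nonneg ht (hw i), fun i => mul_nonneg ht (hz i), ?_, ?_⟩
  · rw [Matrix.mulVec_smul, ← smul_sub, heq]
  · rw [smul_dotProduct, dotProduct_smul, hperp]; simp

lemma krange_zero {n : ℕ} (M : Matrix (Fin n) (Fin n) ℝ) : (0 : Fin n → ℝ) ∈ Krange M :=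
  ⟨0, 0, fun _ => le_refl 0, fun _ => le_refl 0, by simp, by simp⟩

lemma krange_add' {n : ℕ} (M : Matrix (Fin n) (Fin n) ℝ) (hc : Convex ℝ (Krange M))
    {x y : Fin n → ℝ} (hx : x ∈ Krange M) (hy : y ∈ Krange M) : x + y ∈ Krange M := by
  have hmid : (1/2 : ℝ) • x + (1/2 : ℝ) • y ∈ Krange M :=
    hc hx hy (by norm_num) (by norm_num) (by norm_num)
  have h2 := krange_smul' M (t := 2) (by norm_num) hmid
  have : (2:ℝ) • ((1/2 : ℝ) • x + (1/2 : ℝ) • y) = x + y := by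
    module
  rwa [this] at h2

lemma col_mem_krange {n : ℕ} (M : Matrix (Fin n) (Fin n) ℝ) (j : Fin n ⊕ Fin n) :
    (fun i => Amat M i j) ∈ Krange M := by
  cases j with
  | inl k =>
    refine ⟨fun i => Amat M i (Sum.inl k), 0, fun i => ?_, fun _ => le_refl 0, by simp, by simp⟩
    simp [Amat, Matrix.fromCols, Matrix.one_apply]
    split <;> norm_num
  | inr k =>
    refine ⟨0, Pi.single k 1, fun _ => le_refl 0, fun i => ?_, ?_, by simp⟩
    · by_cases h : i = k <;> simp [Pi.single_apply, h]
    · funext i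
      simp [Amat, Matrix.fromCols, Matrix.mulVec, dotProduct, Pi.single_apply,
        mul_ite, Finset.sum_ite_eq']

lemma krange_subset_coneAll {n : ℕ} (M : Matrix (Fin n) (Fin n) ℝ) :
    Krange M ⊆ coneAll M := by
  rintro q ⟨w, z, hw, hz, heq, -⟩
  refine ⟨Sum.elim w z, fun j => by cases j <;> [exact hw _; exact hz _], ?_⟩
  rw [Amat, Matrix.fromCols_mulVec_sumElim, Matrix.one_mulVec, Matrix.neg_mulVec, ← heq]
  abel

lemma coneAll_iff_feasible {n : ℕ} (M : Matrix (Fin n) (Fin n) ℝ) (q : Fin n → ℝ) :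
    q ∈ coneAll M ↔
      ∃ w z : Fin n → ℝ, (∀ i, 0 ≤ w i) ∧ (∀ i, 0 ≤ z i) ∧ w - M.mulVec z = q := by
  constructor
  · rintro ⟨c, hc, rfl⟩
    refine ⟨fun i => c (Sum.inl i), fun i => c (Sum.inr i), fun i => hc _, fun i => hc _, ?_⟩
    have : c = Sum.elim (fun i => c (Sum.inl i)) (fun i => c (Sum.inr i)) := by
      funext j; cases j <;> rfl
    rw [this, Amat, Matrix.fromCols_mulVec_sumElim, Matrix.one_mulVec, Matrix.neg_mulVec]
    abel
  · rintro ⟨w, z, hw, hz, rfl⟩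
    refine ⟨Sum.elim w z, fun j => by cases j <;> [exact hw _; exact hz _], ?_⟩
    rw [Amat, Matrix.fromCols_mulVec_sumElim, Matrix.one_mulVec, Matrix.neg_mulVec]
    abel

lemma coneAll_convex {n : ℕ} (M : Matrix (Fin n) (Fin n) ℝ) : Convex ℝ (coneAll M) := by
  rintro x ⟨c, hc, rfl⟩ y ⟨d, hd, rfl⟩ a b ha hb hab
  refine ⟨a • c + b • d, fun j => add_nonneg (mul_nonneg ha (hc j)) (mul_nonneg hb (hd j)), ?_⟩
  rw [Matrix.mulVec_add, Matrix.mulVec_smul, Matrix.mulVec_smul]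

lemma convex_coneAll_subset {n : ℕ} (M : Matrix (Fin n) (Fin n) ℝ)
    (hc : Convex ℝ (Krange M)) : coneAll M ⊆ Krange M := by
  rintro q ⟨c, hcn, rfl⟩
  have hrepr : (Amat M).mulVec c = ∑ j : Fin n ⊕ Fin n, c j • (fun i => Amat M i j) := by
    funext i
    simp [Matrix.mulVec, dotProduct, Finset.sum_apply, mul_comm]
  rw [hrepr]
  exact Finset.sum_induction _ (· ∈ Krange M) (fun a b ha hb => krange_add' M hc ha hb)
    (krange_zero M) (fun j _ => krange_smul' M (hcn j) (col_mem_krange M j))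

theorem stmt_10 {n : ℕ} (M : Matrix (Fin n) (Fin n) ℝ) :
    (IsQ0 M ↔ Convex ℝ (Krange M)) ∧ (IsQ0 M ↔ Krange M = coneAll M) := by
  constructor
  · constructor
    · intro hQ
      have heq : Krange M = coneAll M := by
        apply Set.Subset.antisymm (krange_subset_coneAll M)
        intro q hq
        exact hQ q ((coneAll_iff_feasible M q).mp hq)
      rw [heq]; exact coneAll_convex M
    · intro hc q hq
      exact convex_coneAll_subset M hc ((coneAll_iff_feasible M q).mpr hq)
  · constructor
    · intro hQ
      apply Set.Subset.antisymm (krange_subset_coneAll M)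
      intro q hq
      exact hQ q ((coneAll_iff_feasible M q).mp hq)
    · intro heq q hq
      rw [heq]
      exact (coneAll_iff_feasible M q).mpr hq
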